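/- If α and β are computable positive probability measures on Σ and S ∈ FREQ^α, then dim^β(S) = dim(S)/(H_k(α) + D_k(α‖β)) and Dim^β(S) = Dim(S)/(H_k(α) + D_k(α‖β)), where dim^β(S) = liminf_{w→S} K(w)/I_β(w), Dim^β(S) = limsup_{w→S} K(w)/I_β(w), dim(S) = liminf_{w→S} K(w)/(|w| log k), Dim(S) = limsup_{w→S} K(w)/(|w| log k), and K is prefix-free Kolmogorov complexity. -/

import Mathlib

open Filter

/-- The length-`n` prefix of the sequence `S`. -/
def pref {k : ℕ} (S : ℕ → Fin k) (n : ℕ) : List (Fin k) := (List.range n).map S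

/-- Self-information `I_β(w) = Σ_{i<|w|} log(1/β(w[i]))` (base-2 logs). -/
noncomputable def selfInfo {k : ℕ} (β : Fin k → ℝ) (w : List (Fin k)) : ℝ :=
  (w.map fun a => Real.logb 2 (β a)⁻¹).sum

/-- A real-valued function on `Fin k` is computable if it has a uniformly
computable rational approximation to within `2^{-r}`. -/
def ComputableMeasure {k : ℕ} (α : Fin k → ℝ) : Prop :=
  ∃ f : Fin k → ℕ → ℚ, Computable₂ f ∧ ∀ a r, |(f a r : ℝ) - α a| ≤ (2 : ℝ) ^ (-(r : ℝ))

lemma listSum_count {k : ℕ} (f : Fin k → ℝ) (l : List (Fin k)) :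
    (l.map f).sum = ∑ a, (l.count a : ℝ) * f a := by
  induction l with
  | nil => simp
  | cons b l ih =>
      simp only [List.map_cons, List.sum_cons, ih, List.count_cons]
      push_cast
      rw [Finset.sum_congr rfl (fun a _ => add_mul _ _ _), Finset.sum_add_distrib]
      have : ∑ a : Fin k, (if (b == a) = true then (1:ℝ) else 0) * f a = f b := by
        simp
      rw [this]; ring

lemma ennreal_liminf_mul_tendsto {u v : ℕ → ENNReal} {M : ENNReal} (hM0 : M ≠ 0) (hMt : M ≠ ⊤)
    (hv : Tendsto v atTop (nhds M)) :
    liminf (fun n => u n * v n) atTop = liminf u atTop * M := by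
  have hinf : liminf v atTop = M := hv.liminf_eq
  have hsup : limsup v atTop = M := hv.limsup_eq
  apply le_antisymm
  · have h := ENNReal.liminf_mul_le (u := v) (v := u) (f := atTop)
      (Or.inl (hsup ▸ hM0)) (Or.inl (hsup ▸ hMt))
    have he : (fun n => u n * v n) = v * u := by funext n; exact mul_comm _ _
    rw [he]
    calc liminf (v * u) atTop ≤ limsup v atTop * liminf u atTop := h
      _ = liminf u atTop * M := by rw [hsup, mul_comm]
  · have h := ENNReal.le_liminf_mul (u := u) (v := v) (f := atTop)
    rw [hinf] at h
    exact h

lemma ennreal_limsup_mul_tendsto {u v : ℕ → ENNReal} {M : ENNReal} (hM0 : M ≠ 0) (hMt : M ≠ ⊤)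
    (hv : Tendsto v atTop (nhds M)) :
    limsup (fun n => u n * v n) atTop = limsup u atTop * M := by
  have hinf : liminf v atTop = M := hv.liminf_eq
  have hsup : limsup v atTop = M := hv.limsup_eq
  apply le_antisymm
  · have h := ENNReal.limsup_mul_le' (u := u) (v := v) (f := atTop)
      (Or.inr (hsup ▸ hMt)) (Or.inr (hsup ▸ hM0))
    rw [hsup] at h
    exact h
  · have h := ENNReal.le_limsup_mul (u := u) (v := v) (f := atTop)
    rw [hinf] at h
    exact h

theorem constructive_dimension_freq_formula
    (k : ℕ) (hk : 2 ≤ k)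
    (α β : Fin k → ℝ) (hαpos : ∀ a, 0 < α a) (hβpos : ∀ a, 0 < β a)
    (hα1 : ∑ a, α a = 1) (hβ1 : ∑ a, β a = 1)
    (hαcomp : ComputableMeasure α) (hβcomp : ComputableMeasure β)
    (S : ℕ → Fin k)
    (hfreq : ∀ a : Fin k, Tendsto
      (fun n : ℕ => ((pref S n).count a : ℝ) / n) atTop (nhds (α a)))
    (K : List (Fin k) → ℕ) :
    (liminf (fun n : ℕ => ENNReal.ofReal ((K (pref S n) : ℝ) / selfInfo β (pref S n))) atTop =
      liminf (fun n : ℕ => ENNReal.ofReal ((K (pref S n) : ℝ) / ((n : ℝ) * Real.logb 2 k))) atTop /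
        ENNReal.ofReal
          ((∑ a, α a * Real.logb 2 (α a)⁻¹) / Real.logb 2 k +
           (∑ a, α a * Real.logb 2 (α a / β a)) / Real.logb 2 k)) ∧
    (limsup (fun n : ℕ => ENNReal.ofReal ((K (pref S n) : ℝ) / selfInfo β (pref S n))) atTop =
      limsup (fun n : ℕ => ENNReal.ofReal ((K (pref S n) : ℝ) / ((n : ℝ) * Real.logb 2 k))) atTop /
        ENNReal.ofReal
          ((∑ a, α a * Real.logb 2 (α a)⁻¹) / Real.logb 2 k +
           (∑ a, α a * Real.logb 2 (α a / β a)) / Real.logb 2 k)) := by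
  -- notations
  set c : ℝ := ∑ a, α a * Real.logb 2 (β a)⁻¹ with hc_def
  set L : ℝ := Real.logb 2 k with hL_def
  have hL : 0 < L := Real.logb_pos one_lt_two (by exact_mod_cast hk)
  -- each β a < 1
  have hβlt1 : ∀ a, β a < 1 := by
    intro a
    have hne : ∃ b : Fin k, b ≠ a := by
      by_cases h : a = ⟨0, by omega⟩
      · exact ⟨⟨1, by omega⟩, by simp [h, Fin.ext_iff]⟩
      · exact ⟨⟨0, by omega⟩, fun he => h he.symm⟩
    rcases hne with ⟨b, hb⟩
    calc β a < ∑ x, β x :=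
          Finset.single_lt_sum hb (Finset.mem_univ a)
            (Finset.mem_univ b) (hβpos b) (fun x _ _ => (hβpos x).le)
      _ = 1 := hβ1
  have hc : 0 < c := by
    apply Finset.sum_pos
    · intro a _
      exact mul_pos (hαpos a) (Real.logb_pos one_lt_two
        ((one_lt_inv₀ (hβpos a)).mpr (hβlt1 a)))
    · exact ⟨⟨0, by omega⟩, Finset.mem_univ _⟩
  -- the constant in the statement equals c / L
  have hD : (∑ a, α a * Real.logb 2 (α a)⁻¹) / L + (∑ a, α a * Real.logb 2 (α a / β a)) / L
      = c / L := by
    rw [← add_div]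
    congr 1
    rw [hc_def, ← Finset.sum_add_distrib]
    apply Finset.sum_congr rfl
    intro a _
    rw [← mul_add]
    congr 1
    rw [Real.logb_inv, Real.logb_div (ne_of_gt (hαpos a)) (ne_of_gt (hβpos a)), Real.logb_inv]
    ring
  -- selfInfo in terms of counts
  have hself : ∀ n, selfInfo β (pref S n) = ∑ a, ((pref S n).count a : ℝ) * Real.logb 2 (β a)⁻¹ :=
    fun n => listSum_count _ _
  -- selfInfo / n → c
  have hsn : Tendsto (fun n : ℕ => selfInfo β (pref S n) / n) atTop (nhds c) := by
    have : Tendsto (fun n : ℕ => ∑ a, ((pref S n).count a : ℝ) / n * Real.logb 2 (β a)⁻¹)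
        atTop (nhds c) := by
      rw [hc_def]
      exact tendsto_finset_sum _ (fun a _ => (hfreq a).mul_const _)
    refine this.congr (fun n => ?_)
    rw [hself n, Finset.sum_div]
    exact Finset.sum_congr rfl (fun a _ => by ring)
  -- selfInfo / (n * L) → c / L
  have hst : Tendsto (fun n : ℕ => selfInfo β (pref S n) / ((n : ℝ) * L)) atTop (nhds (c / L)) := by
    have := hsn.div_const L
    refine this.congr (fun n => ?_)
    rw [div_div]
  -- (n * L) / selfInfo → L / c
  have hts : Tendsto (fun n : ℕ => ((n : ℝ) * L) / selfInfo β (pref S n)) atTop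
      (nhds (L / c)) := by
    have h := hst.inv₀ (by positivity)
    have he : (c / L)⁻¹ = L / c := by rw [inv_div]
    rw [he] at h
    refine h.congr (fun n => ?_)
    rw [inv_div]
  -- eventually selfInfo > 0
  have hspos : ∀ᶠ n : ℕ in atTop, 0 < selfInfo β (pref S n) := by
    have h1 : ∀ᶠ n : ℕ in atTop, 0 < selfInfo β (pref S n) / ((n : ℝ) * L) :=
      hst.eventually (lt_mem_nhds (by positivity))
    filter_upwards [h1, eventually_gt_atTop 0] with n h hn
    have hnL : 0 < (n : ℝ) * L := by
      have : (0:ℝ) < n := by exact_mod_cast hn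
      positivity
    by_contra hcon
    push_neg at hcon
    have : selfInfo β (pref S n) / ((n : ℝ) * L) ≤ 0 := div_nonpos_of_nonpos_of_nonneg hcon hnL.le
    linarith
  -- the key pointwise (eventual) product decomposition
  have hev : ∀ᶠ n : ℕ in atTop,
      ENNReal.ofReal ((K (pref S n) : ℝ) / selfInfo β (pref S n)) =
      ENNReal.ofReal ((K (pref S n) : ℝ) / ((n : ℝ) * L)) *
        ENNReal.ofReal (((n : ℝ) * L) / selfInfo β (pref S n)) := by
    filter_upwards [hspos, eventually_gt_atTop 0] with n hs hn
    have hnL : ((n : ℝ) * L) ≠ 0 := by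
      have : (0:ℝ) < n := by exact_mod_cast hn
      positivity
    rw [← ENNReal.ofReal_mul (by positivity)]
    congr 1
    field_simp
  -- the limit constant M
  set M : ENNReal := ENNReal.ofReal (L / c) with hM_def
  have hM0 : M ≠ 0 := by
    rw [hM_def]
    simp only [ne_eq, ENNReal.ofReal_eq_zero, not_le]
    positivity
  have hMt : M ≠ ⊤ := ENNReal.ofReal_ne_top
  have hvM : Tendsto (fun n : ℕ => ENNReal.ofReal (((n : ℝ) * L) / selfInfo β (pref S n)))
      atTop (nhds M) := (ENNReal.continuous_ofReal.tendsto _).comp hts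
  -- division by ofReal (c/L) = multiplication by M
  have hdiv : ∀ x : ENNReal, x / ENNReal.ofReal (c / L) = x * M := by
    intro x
    rw [div_eq_mul_inv, hM_def, ← ENNReal.ofReal_inv_of_pos (by positivity), inv_div]
  rw [hD]
  constructor
  · rw [liminf_congr hev, ennreal_liminf_mul_tendsto hM0 hMt hvM, hdiv]
  · rw [limsup_congr hev, ennreal_limsup_mul_tendsto hM0 hMt hvM, hdiv]
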